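/- In the US legislative game: (a) for every k, if c_v(k) = 0 then c_r(k) = 0; (b) for every k with 270 ≤ k ≤ 356 or 380 ≤ k ≤ 487, c_v(k) > c_r(k), and for every k with 357 ≤ k ≤ 379, c_r(k) > c_v(k). -/

import Mathlib

/-- The players of the US legislative game: the president, the vice president,
100 senators, and 435 representatives. -/
inductive USPlayer where
  | pres : USPlayer
  | vp : USPlayer
  | sen : Fin 100 → USPlayer
  | rep : Fin 435 → USPlayer
  deriving DecidableEq

/-- Whether a player is a senator. -/
def USPlayer.isSen : USPlayer → Bool
  | .sen _ => true
  | _ => false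

/-- Whether a player is a representative. -/
def USPlayer.isRep : USPlayer → Bool
  | .rep _ => true
  | _ => false

/-- The number of senators in a coalition. -/
def numSen (S : Finset USPlayer) : ℕ := (S.filter (fun p => p.isSen)).card

/-- The number of representatives in a coalition. -/
def numRep (S : Finset USPlayer) : ℕ := (S.filter (fun p => p.isRep)).card

/-- A coalition is winning in the US legislative game iff either the president is in it
together with at least 218 representatives and either at least 51 senators or the vice
president and at least 50 senators; or it contains at least 67 senators and at least
290 representatives (veto override). -/
def usWinning (S : Finset USPlayer) : Prop :=
  (USPlayer.pres ∈ S ∧ 218 ≤ numRep S ∧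
    (51 ≤ numSen S ∨ (USPlayer.vp ∈ S ∧ 50 ≤ numSen S))) ∨
  (67 ≤ numSen S ∧ 290 ≤ numRep S)

/-- The number of coalitions of size `k` in which player `i` is critical in the US
legislative game. -/
noncomputable def usCrit (i : USPlayer) (k : ℕ) : ℕ :=
  Set.ncard {S : Finset USPlayer |
    S.card = k ∧ i ∈ S ∧ usWinning S ∧ ¬ usWinning (S.erase i)}
set_option maxRecDepth 10000
set_option linter.constructorNameAsVariable false

open Finset

instance : Fintype USPlayer :=
  Fintype.ofEquiv (Unit ⊕ Unit ⊕ Fin 100 ⊕ Fin 435)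
    { toFun := fun x => match x with
        | .inl _ => .pres
        | .inr (.inl _) => .vp
        | .inr (.inr (.inl i)) => .sen i
        | .inr (.inr (.inr j)) => .rep j
      invFun := fun x => match x with
        | .pres => .inl ()
        | .vp => .inr (.inl ())
        | .sen i => .inr (.inr (.inl i))
        | .rep j => .inr (.inr (.inr j))
      left_inv := by rintro (_ | (_ | (_ | _))) <;> rfl
      right_inv := by rintro (_ | _ | _ | _) <;> rfl }

def ofQuad (p v : Bool) (A : Finset (Fin 100)) (B : Finset (Fin 435)) : Finset USPlayer :=
  ((if p then {USPlayer.pres} else ∅) ∪ (if v then {USPlayer.vp} else ∅)) ∪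
    (A.image USPlayer.sen ∪ B.image USPlayer.rep)

lemma mem_ofQuad_pres {p v A B} : USPlayer.pres ∈ ofQuad p v A B ↔ p = true := by
  cases p <;> cases v <;> simp [ofQuad]
lemma mem_ofQuad_vp {p v A B} : USPlayer.vp ∈ ofQuad p v A B ↔ v = true := by
  cases p <;> cases v <;> simp [ofQuad]
lemma mem_ofQuad_sen {p v A B i} : USPlayer.sen i ∈ ofQuad p v A B ↔ i ∈ A := by
  cases p <;> cases v <;> simp [ofQuad]
lemma mem_ofQuad_rep {p v A B j} : USPlayer.rep j ∈ ofQuad p v A B ↔ j ∈ B := by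
  cases p <;> cases v <;> simp [ofQuad]

lemma filter_sen_ofQuad {p v A B} :
    (ofQuad p v A B).filter (fun x => x.isSen) = A.image USPlayer.sen := by
  ext x
  rw [mem_filter]
  cases x <;> simp [USPlayer.isSen, mem_ofQuad_pres, mem_ofQuad_vp, mem_ofQuad_sen, mem_ofQuad_rep]

lemma filter_rep_ofQuad {p v A B} :
    (ofQuad p v A B).filter (fun x => x.isRep) = B.image USPlayer.rep := by
  ext x
  rw [mem_filter]
  cases x <;> simp [USPlayer.isRep, mem_ofQuad_pres, mem_ofQuad_vp, mem_ofQuad_sen, mem_ofQuad_rep]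

lemma sen_inj : Function.Injective USPlayer.sen := fun a b h => by cases h; rfl
lemma rep_inj : Function.Injective USPlayer.rep := fun a b h => by cases h; rfl

lemma numSen_ofQuad {p v A B} : numSen (ofQuad p v A B) = A.card := by
  rw [numSen, filter_sen_ofQuad, card_image_of_injective _ sen_inj]
lemma numRep_ofQuad {p v A B} : numRep (ofQuad p v A B) = B.card := by
  rw [numRep, filter_rep_ofQuad, card_image_of_injective _ rep_inj]

lemma card_ofQuad {p v A B} :
    (ofQuad p v A B).card = (if p then 1 else 0) + (if v then 1 else 0) + A.card + B.card := by
  have h1 : Disjoint (A.image USPlayer.sen) (B.image USPlayer.rep) := by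
    rw [disjoint_left]
    intro x hx hx'
    simp only [mem_image] at hx hx'
    obtain ⟨i, _, rfl⟩ := hx
    obtain ⟨j, _, h⟩ := hx'
    cases h
  have h2 : Disjoint ((if p then {USPlayer.pres} else ∅) ∪ (if v then {USPlayer.vp} else ∅))
      (A.image USPlayer.sen ∪ B.image USPlayer.rep) := by
    rw [disjoint_left]
    intro x hx hx'
    have hx2 : x = USPlayer.pres ∨ x = USPlayer.vp := by cases p <;> cases v <;> simp_all
    simp only [mem_union, mem_image] at hx'
    rcases hx2 with rfl | rfl <;> rcases hx' with ⟨i, _, h⟩ | ⟨i, _, h⟩ <;> cases h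
  have h3 : Disjoint ((if p then ({USPlayer.pres} : Finset USPlayer) else ∅))
      ((if v then ({USPlayer.vp} : Finset USPlayer) else ∅)) := by
    cases p <;> cases v <;> simp [disjoint_left]
  rw [ofQuad, card_union_of_disjoint h2, card_union_of_disjoint h1, card_union_of_disjoint h3,
    card_image_of_injective _ sen_inj, card_image_of_injective _ rep_inj]
  cases p <;> cases v <;> simp <;> omega

lemma erase_vp_ofQuad {p v A B} :
    (ofQuad p v A B).erase USPlayer.vp = ofQuad p false A B := by
  ext x
  rw [mem_erase]
  cases x <;> simp [mem_ofQuad_pres, mem_ofQuad_vp, mem_ofQuad_sen, mem_ofQuad_rep]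

lemma erase_rep_ofQuad {p v A B} (r : Fin 435) :
    (ofQuad p v A B).erase (USPlayer.rep r) = ofQuad p v A (B.erase r) := by
  ext x
  rw [mem_erase]
  cases x <;>
    simp [mem_ofQuad_pres, mem_ofQuad_vp, mem_ofQuad_sen, mem_ofQuad_rep, rep_inj.eq_iff,
      and_comm]

instance : DecidablePred usWinning := fun S => by unfold usWinning; infer_instance

lemma usWinning_ofQuad {p v A B} :
    usWinning (ofQuad p v A B) ↔
      ((p = true ∧ 218 ≤ B.card ∧ (51 ≤ A.card ∨ (v = true ∧ 50 ≤ A.card))) ∨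
        (67 ≤ A.card ∧ 290 ≤ B.card)) := by
  rw [usWinning, numSen_ofQuad, numRep_ofQuad, mem_ofQuad_pres, mem_ofQuad_vp]

lemma ofQuad_toQuad (S : Finset USPlayer) :
    ofQuad (USPlayer.pres ∈ S) (USPlayer.vp ∈ S) (univ.filter (fun i => USPlayer.sen i ∈ S))
      (univ.filter (fun j => USPlayer.rep j ∈ S)) = S := by
  ext x
  cases x <;> simp [mem_ofQuad_pres, mem_ofQuad_vp, mem_ofQuad_sen, mem_ofQuad_rep]

abbrev Quad := Bool × Bool × Finset (Fin 100) × Finset (Fin 435)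

lemma ncard_eq_quad (P : Finset USPlayer → Prop) [DecidablePred P] :
    {S | P S}.ncard =
      ((univ : Finset Quad).filter (fun q => P (ofQuad q.1 q.2.1 q.2.2.1 q.2.2.2))).card := by
  have hset : {S | P S} = ↑(univ.filter P) := by ext S; simp
  rw [hset, Set.ncard_coe_finset]
  apply Finset.card_bij'
    (i := fun S _ => ((decide (USPlayer.pres ∈ S), decide (USPlayer.vp ∈ S),
      univ.filter (fun i => USPlayer.sen i ∈ S), univ.filter (fun j => USPlayer.rep j ∈ S)) : Quad))
    (j := fun q _ => ofQuad q.1 q.2.1 q.2.2.1 q.2.2.2)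
  · intro S hS
    simp only [mem_filter, mem_univ, true_and] at hS ⊢
    rwa [ofQuad_toQuad]
  · intro q hq
    simp only [mem_filter, mem_univ, true_and] at hq ⊢
    exact hq
  · intro S hS
    exact ofQuad_toQuad S
  · intro q hq
    obtain ⟨p, v, A, B⟩ := q
    refine Prod.ext ?_ (Prod.ext ?_ (Prod.ext ?_ ?_)) <;> simp only
    · simp [mem_ofQuad_pres]
    · simp [mem_ofQuad_vp]
    · ext i; simp [mem_ofQuad_sen]
    · ext j; simp [mem_ofQuad_rep]

lemma card_bool (b : Bool) : ((univ : Finset Bool).filter (fun x => x = b)).card = 1 := by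
  cases b <;> decide

lemma prod_count {α β : Type*} [Fintype α] [Fintype β] (p : α → Prop) (q : β → Prop)
    [DecidablePred p] [DecidablePred q] :
    ((univ : Finset (α × β)).filter (fun x => p x.1 ∧ q x.2)).card =
      (univ.filter p).card * (univ.filter q).card := by
  rw [← univ_product_univ, filter_product, card_product]

lemma count_card_eq (n a : ℕ) :
    ((univ : Finset (Finset (Fin n))).filter (fun A => A.card = a)).card = Nat.choose n a := by
  rw [← powerset_univ, ← powersetCard_eq_filter, card_powersetCard, card_univ, Fintype.card_fin]

lemma countCard (n c d k : ℕ) :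
    ((univ : Finset (Finset (Fin n))).filter (fun A => k = c + A.card ∧ d ≤ A.card)).card =
      if c + d ≤ k then Nat.choose n (k - c) else 0 := by
  split_ifs with h
  · rw [show (univ : Finset (Finset (Fin n))).filter (fun A => k = c + A.card ∧ d ≤ A.card)
        = univ.filter (fun A => A.card = k - c) from ?_, count_card_eq]
    apply filter_congr
    intro A _
    constructor
    · rintro ⟨h1, h2⟩; omega
    · intro h1; omega
  · rw [filter_false_of_mem, card_empty]
    intro A _
    rintro ⟨h1, h2⟩; omega

lemma countMem (r : Fin 435) (m : ℕ) :
    ((univ : Finset (Finset (Fin 435))).filter (fun B => r ∈ B ∧ B.card = m + 1)).card =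
      Nat.choose 434 m := by
  have hcard : ((univ : Finset (Fin 435)).erase r).card = 434 := by
    rw [card_erase_of_mem (mem_univ r), card_univ, Fintype.card_fin]
  rw [← hcard, ← card_powersetCard]
  apply Finset.card_bij' (fun B _ => B.erase r) (fun C _ => insert r C) ?hi ?hj ?li ?ri
  case hi =>
    intro B hB
    simp only [mem_filter, mem_univ, true_and] at hB
    rw [mem_powersetCard]
    exact ⟨erase_subset_erase r (subset_univ B), by rw [card_erase_of_mem hB.1, hB.2]; rfl⟩
  case hj =>
    intro C hC
    rw [mem_powersetCard] at hC
    have hr : r ∉ C := fun h => (notMem_erase r univ) (hC.1 h)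
    simp only [mem_filter, mem_univ, true_and]
    exact ⟨mem_insert_self r C, by rw [card_insert_of_notMem hr, hC.2]⟩
  case li =>
    intro B hB
    simp only [mem_filter, mem_univ, true_and] at hB
    exact insert_erase hB.1
  case ri =>
    intro C hC
    rw [mem_powersetCard] at hC
    have hr : r ∉ C := fun h => (notMem_erase r univ) (hC.1 h)
    exact erase_insert hr

def cvR (k : ℕ) : ℕ := Nat.choose 100 50 * (if 270 ≤ k then Nat.choose 435 (k - 52) else 0)

def crR (k : ℕ) : ℕ :=
  (if 270 ≤ k then Nat.choose 100 (k - 220) else 0) * Nat.choose 434 217 +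
  ((if 270 ≤ k then Nat.choose 100 (k - 219) else 0) * Nat.choose 434 217 +
  ((if 358 ≤ k then Nat.choose 100 (k - 291) else 0) * Nat.choose 434 289 +
   (if 357 ≤ k then Nat.choose 100 (k - 290) else 0) * Nat.choose 434 289))

lemma cv_eq (k : ℕ) : usCrit USPlayer.vp k = cvR k := by
  rw [cvR]
  rw [usCrit, ncard_eq_quad]
  have hiff : ∀ q : Quad,
      ((ofQuad q.1 q.2.1 q.2.2.1 q.2.2.2).card = k ∧ USPlayer.vp ∈ ofQuad q.1 q.2.1 q.2.2.1 q.2.2.2 ∧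
        usWinning (ofQuad q.1 q.2.1 q.2.2.1 q.2.2.2) ∧
        ¬ usWinning ((ofQuad q.1 q.2.1 q.2.2.1 q.2.2.2).erase USPlayer.vp)) ↔
      (q.1 = true ∧ (q.2.1 = true ∧ (q.2.2.1.card = 50 ∧ (k = 52 + q.2.2.2.card ∧ 218 ≤ q.2.2.2.card)))) := by
    rintro ⟨p, v, A, B⟩
    simp only [card_ofQuad, mem_ofQuad_vp, usWinning_ofQuad, erase_vp_ofQuad]
    cases p <;> cases v <;> simp <;> omega
  rw [filter_congr (fun q _ => hiff q)]
  rw [prod_count (fun x : Bool => x = true)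
      (fun y : Bool × Finset (Fin 100) × Finset (Fin 435) =>
        y.1 = true ∧ (y.2.1.card = 50 ∧ (k = 52 + y.2.2.card ∧ 218 ≤ y.2.2.card)))]
  rw [prod_count (fun x : Bool => x = true)
      (fun y : Finset (Fin 100) × Finset (Fin 435) =>
        y.1.card = 50 ∧ (k = 52 + y.2.card ∧ 218 ≤ y.2.card))]
  rw [prod_count (fun A : Finset (Fin 100) => A.card = 50)
      (fun B : Finset (Fin 435) => k = 52 + B.card ∧ 218 ≤ B.card)]
  rw [card_bool, count_card_eq, countCard]
  norm_num

lemma quad_count (pb vb : Bool) (pa : Finset (Fin 100) → Prop) (pc : Finset (Fin 435) → Prop)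
    [DecidablePred pa] [DecidablePred pc] :
    ((univ : Finset Quad).filter
      (fun q => q.1 = pb ∧ (q.2.1 = vb ∧ (pa q.2.2.1 ∧ pc q.2.2.2)))).card =
      (univ.filter pa).card * (univ.filter pc).card := by
  rw [prod_count (fun x : Bool => x = pb)
      (fun y : Bool × Finset (Fin 100) × Finset (Fin 435) =>
        y.1 = vb ∧ (pa y.2.1 ∧ pc y.2.2))]
  rw [prod_count (fun x : Bool => x = vb)
      (fun y : Finset (Fin 100) × Finset (Fin 435) => pa y.1 ∧ pc y.2)]
  rw [prod_count pa pc, card_bool, card_bool, one_mul, one_mul]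

lemma card_filter_or4 {α : Type*} [Fintype α] [DecidableEq α] (p1 p2 p3 p4 : α → Prop)
    [DecidablePred p1] [DecidablePred p2] [DecidablePred p3] [DecidablePred p4]
    (h12 : ∀ a, p1 a → p2 a → False) (h13 : ∀ a, p1 a → p3 a → False)
    (h14 : ∀ a, p1 a → p4 a → False) (h23 : ∀ a, p2 a → p3 a → False)
    (h24 : ∀ a, p2 a → p4 a → False) (h34 : ∀ a, p3 a → p4 a → False) :
    ((univ : Finset α).filter (fun a => p1 a ∨ p2 a ∨ p3 a ∨ p4 a)).card =
      (univ.filter p1).card + ((univ.filter p2).card +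
        ((univ.filter p3).card + (univ.filter p4).card)) := by
  have dd : ∀ (pa pb : α → Prop) [DecidablePred pa] [DecidablePred pb],
      (∀ a, pa a → pb a → False) → Disjoint (univ.filter pa) (univ.filter pb) := by
    intro pa pb _ _ h
    rw [Finset.disjoint_filter]
    exact fun x _ hx hx' => h x hx hx'
  rw [filter_or, filter_or, filter_or]
  rw [card_union_of_disjoint, card_union_of_disjoint, card_union_of_disjoint (dd _ _ h34)]
  · exact Finset.disjoint_union_right.mpr ⟨dd _ _ h23, dd _ _ h24⟩
  · exact Finset.disjoint_union_right.mpr ⟨dd _ _ h12,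
      Finset.disjoint_union_right.mpr ⟨dd _ _ h13, dd _ _ h14⟩⟩

lemma cr_eq (r : Fin 435) (k : ℕ) : usCrit (USPlayer.rep r) k = crR k := by
  rw [crR]
  rw [usCrit, ncard_eq_quad]
  have hiff : ∀ q : Quad,
      ((ofQuad q.1 q.2.1 q.2.2.1 q.2.2.2).card = k ∧
        USPlayer.rep r ∈ ofQuad q.1 q.2.1 q.2.2.1 q.2.2.2 ∧
        usWinning (ofQuad q.1 q.2.1 q.2.2.1 q.2.2.2) ∧
        ¬ usWinning ((ofQuad q.1 q.2.1 q.2.2.1 q.2.2.2).erase (USPlayer.rep r))) ↔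
      ((q.1 = true ∧ (q.2.1 = true ∧ ((k = 220 + q.2.2.1.card ∧ 50 ≤ q.2.2.1.card) ∧
          (r ∈ q.2.2.2 ∧ q.2.2.2.card = 217 + 1)))) ∨
       ((q.1 = true ∧ (q.2.1 = false ∧ ((k = 219 + q.2.2.1.card ∧ 51 ≤ q.2.2.1.card) ∧
          (r ∈ q.2.2.2 ∧ q.2.2.2.card = 217 + 1)))) ∨
       ((q.1 = false ∧ (q.2.1 = true ∧ ((k = 291 + q.2.2.1.card ∧ 67 ≤ q.2.2.1.card) ∧
          (r ∈ q.2.2.2 ∧ q.2.2.2.card = 289 + 1)))) ∨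
        (q.1 = false ∧ (q.2.1 = false ∧ ((k = 290 + q.2.2.1.card ∧ 67 ≤ q.2.2.1.card) ∧
          (r ∈ q.2.2.2 ∧ q.2.2.2.card = 289 + 1))))))) := by
    rintro ⟨p, v, A, B⟩
    simp only [card_ofQuad, mem_ofQuad_rep, usWinning_ofQuad, erase_rep_ofQuad]
    by_cases hr : r ∈ B
    · have hb : 1 ≤ B.card := Finset.card_pos.mpr ⟨r, hr⟩
      simp only [hr, card_erase_of_mem hr, true_and]
      cases p <;> cases v <;> simp <;> omega
    · simp [hr]
  rw [filter_congr (fun q _ => hiff q)]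
  rw [card_filter_or4]
  · rw [quad_count true true (fun A => k = 220 + A.card ∧ 50 ≤ A.card)
        (fun B => r ∈ B ∧ B.card = 217 + 1),
      quad_count true false (fun A => k = 219 + A.card ∧ 51 ≤ A.card)
        (fun B => r ∈ B ∧ B.card = 217 + 1),
      quad_count false true (fun A => k = 291 + A.card ∧ 67 ≤ A.card)
        (fun B => r ∈ B ∧ B.card = 289 + 1),
      quad_count false false (fun A => k = 290 + A.card ∧ 67 ≤ A.card)
        (fun B => r ∈ B ∧ B.card = 289 + 1),
      countCard 100 220 50 k, countCard 100 219 51 k, countCard 100 291 67 k,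
      countCard 100 290 67 k, countMem r 217, countMem r 289]
  all_goals try norm_num
  all_goals rintro ⟨p, v, A, B⟩ ⟨h1, h2, _⟩ ⟨g1, g2, _⟩ <;> simp_all

def Cf (n k : ℕ) : ℕ := n.factorial / (k.factorial * (n - k).factorial)

lemma Cf_eq (n k : ℕ) (hn : 0 < n) : Cf n k = Nat.choose n k := by
  by_cases h : k ≤ n
  · rw [Cf, Nat.choose_eq_factorial_div_factorial h]
  · push_neg at h
    rw [Nat.choose_eq_zero_of_lt h, Cf, show n - k = 0 by omega, Nat.factorial_zero, mul_one]
    exact Nat.div_eq_of_lt ((Nat.factorial_lt hn).mpr h)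

lemma numeric : ∀ j < 218,
    ((270 + j ≤ 356 ∨ 380 ≤ 270 + j) → crR (270 + j) < cvR (270 + j)) ∧
    (357 ≤ 270 + j → 270 + j ≤ 379 → cvR (270 + j) < crR (270 + j)) := by
  have h100 : ∀ m, Nat.choose 100 m = Cf 100 m := fun m => (Cf_eq 100 m (by norm_num)).symm
  have h434 : ∀ m, Nat.choose 434 m = Cf 434 m := fun m => (Cf_eq 434 m (by norm_num)).symm
  have h435 : ∀ m, Nat.choose 435 m = Cf 435 m := fun m => (Cf_eq 435 m (by norm_num)).symm
  simp only [cvR, crR, h100, h434, h435]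
  decide


/-- Proposition 6 of the paper: (a) if the vice president's critical number vanishes at
`k`, so does a representative's; (b) for `270 ≤ k ≤ 356` or `380 ≤ k ≤ 487` the vice
president's critical number strictly exceeds the representative's, while for
`357 ≤ k ≤ 379` the representative's strictly exceeds the vice president's. -/
theorem us_vp_vs_representative (r : Fin 435) :
    (∀ k : ℕ, usCrit USPlayer.vp k = 0 → usCrit (USPlayer.rep r) k = 0) ∧
    (∀ k : ℕ, (270 ≤ k ∧ k ≤ 356) ∨ (380 ≤ k ∧ k ≤ 487) →
      usCrit USPlayer.vp k > usCrit (USPlayer.rep r) k) ∧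
    (∀ k : ℕ, 357 ≤ k → k ≤ 379 →
      usCrit (USPlayer.rep r) k > usCrit USPlayer.vp k) := by
  refine ⟨?_, ?_, ?_⟩
  · intro k h
    rw [cv_eq, cvR] at h
    rw [cr_eq, crR]
    by_cases h1 : 270 ≤ k
    · rw [if_pos h1] at h
      have h50 : Nat.choose 100 50 ≠ 0 := (Nat.choose_pos (by norm_num)).ne'
      have h2 : Nat.choose 435 (k - 52) = 0 := by
        rcases Nat.mul_eq_zero.mp h with h' | h'
        · exact absurd h' h50
        · exact h'
      have h3 : 435 < k - 52 := Nat.choose_eq_zero_iff.mp h2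
      rw [Nat.choose_eq_zero_of_lt (show 100 < k - 220 by omega),
        Nat.choose_eq_zero_of_lt (show 100 < k - 219 by omega),
        Nat.choose_eq_zero_of_lt (show 100 < k - 291 by omega),
        Nat.choose_eq_zero_of_lt (show 100 < k - 290 by omega)]
      simp
    · rw [if_neg h1, if_neg h1, if_neg (show ¬ 358 ≤ k by omega),
        if_neg (show ¬ 357 ≤ k by omega)]
      simp
  · intro k hk
    obtain ⟨j, hj, rfl⟩ : ∃ j, j < 218 ∧ k = 270 + j := ⟨k - 270, by omega, by omega⟩
    rw [cv_eq, cr_eq]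
    exact (numeric j hj).1 (by omega)
  · intro k h1 h2
    obtain ⟨j, hj, rfl⟩ : ∃ j, j < 218 ∧ k = 270 + j := ⟨k - 270, by omega, by omega⟩
    rw [cv_eq, cr_eq]
    exact (numeric j hj).2 (by omega) (by omega)
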